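/- Fix n ∈ ℕ and set σ = (n+1)(n+2). For every m > n, the real symmetric matrix with rows and columns indexed by i, j ∈ {n+1, …, m} and entries (D − σM)(i,j) — that is, the trailing finite section of D − σM obtained by deleting the first n+1 rows and columns — is positive definite. -/

import Mathlib

open Finset Matrix



/-- The diagonal stiffness matrix `D` with `D(n,n) = (n+1)(n+2)`. -/
noncomputable def Dmat (i j : ℕ) : ℝ :=
  if i = j then ((i : ℝ) + 1) * ((i : ℝ) + 2) else 0

/-- The symmetric pentadiagonal mass matrix `M` with
`M(n,n) = 2(n+1)(n+2)/((2n+1)(2n+5))` and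
`M(n,n+2) = M(n+2,n) = -√((n+1)(n+2)(n+3)(n+4)/((2n+3)(2n+5)²(2n+7)))`. -/
noncomputable def Mmat (i j : ℕ) : ℝ :=
  if i = j then 2 * ((i : ℝ) + 1) * ((i : ℝ) + 2) / ((2 * (i : ℝ) + 1) * (2 * (i : ℝ) + 5))
  else if i + 2 = j then
    -Real.sqrt (((i : ℝ) + 1) * ((i : ℝ) + 2) * ((i : ℝ) + 3) * ((i : ℝ) + 4) /
      ((2 * (i : ℝ) + 3) * (2 * (i : ℝ) + 5) ^ 2 * (2 * (i : ℝ) + 7)))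
  else if j + 2 = i then
    -Real.sqrt (((j : ℝ) + 1) * ((j : ℝ) + 2) * ((j : ℝ) + 3) * ((j : ℝ) + 4) /
      ((2 * (j : ℝ) + 3) * (2 * (j : ℝ) + 5) ^ 2 * (2 * (j : ℝ) + 7)))
  else 0





lemma posDef_of_dominant {k : ℕ} (A : Matrix (Fin k) (Fin k) ℝ)
    (hsym : A.IsHermitian)
    (hdom : ∀ i, ∑ j ∈ Finset.univ.erase i, |A i j| < A i i) :
    A.PosDef := by
  refine Matrix.posDef_iff_dotProduct_mulVec.mpr ⟨hsym, fun x hx => ?_⟩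
  have hgoal : dotProduct (star x) (A *ᵥ x) = ∑ i, x i * (A *ᵥ x) i := by
    simp [dotProduct]
  rw [hgoal]
  have hsymm : ∀ i j, A j i = A i j := by
    intro i j
    have := congrFun (congrFun hsym i) j
    simpa [Matrix.conjTranspose_apply] using this
  have key : ∀ i, x i * (A.mulVec x) i ≥
      x i ^ 2 * A i i - ∑ j ∈ Finset.univ.erase i, |A i j| * (x i ^ 2 + x j ^ 2) / 2 := by
    intro i
    have hmv : (A.mulVec x) i = ∑ j, A i j * x j := by
      simp [Matrix.mulVec, dotProduct]
    rw [hmv, Finset.mul_sum, ← Finset.sum_erase_add _ _ (Finset.mem_univ i)]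
    have h1 : ∀ j ∈ Finset.univ.erase i,
        -(|A i j| * (x i ^ 2 + x j ^ 2) / 2) ≤ x i * (A i j * x j) := by
      intro j _
      have h3 : |x i| * |x j| ≤ (x i ^ 2 + x j ^ 2) / 2 := by
        nlinarith [sq_nonneg (|x i| - |x j|), sq_abs (x i), sq_abs (x j)]
      have h2 : |x i * (A i j * x j)| ≤ |A i j| * (x i ^ 2 + x j ^ 2) / 2 := by
        rw [abs_mul, abs_mul]
        nlinarith [abs_nonneg (A i j), abs_nonneg (x i), abs_nonneg (x j),
          mul_le_mul_of_nonneg_left h3 (abs_nonneg (A i j))]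
      nlinarith [neg_abs_le (x i * (A i j * x j))]
    have h4 := Finset.sum_le_sum h1
    rw [Finset.sum_neg_distrib] at h4
    nlinarith [h4]
  have erase_eq : ∀ (g : Fin k → Fin k → ℝ) (i : Fin k),
      ∑ j ∈ Finset.univ.erase i, g i j = ∑ j, if j = i then 0 else g i j := by
    intro g i
    rw [← Finset.sum_erase (a := i) (f := fun j => if j = i then (0:ℝ) else g i j) Finset.univ (by simp)]
    exact Finset.sum_congr rfl fun j hj => (if_neg (Finset.ne_of_mem_erase hj)).symm
  have erase_eq' : ∀ (g : Fin k → Fin k → ℝ) (j : Fin k),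
      ∑ i ∈ Finset.univ.erase j, g i j = ∑ i, if j = i then 0 else g i j := by
    intro g j
    rw [← Finset.sum_erase (a := j) (f := fun i => if j = i then (0:ℝ) else g i j) Finset.univ (by simp)]
    exact Finset.sum_congr rfl fun i hi => (if_neg (Ne.symm (Finset.ne_of_mem_erase hi))).symm
  have swap : ∑ i, ∑ j ∈ Finset.univ.erase i, |A i j| * x j ^ 2
      = ∑ i, x i ^ 2 * ∑ j ∈ Finset.univ.erase i, |A i j| := by
    calc ∑ i, ∑ j ∈ Finset.univ.erase i, |A i j| * x j ^ 2
        = ∑ i, ∑ j, if j = i then 0 else |A i j| * x j ^ 2 := by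
          exact Finset.sum_congr rfl fun i _ => erase_eq (fun i j => |A i j| * x j ^ 2) i
      _ = ∑ j, ∑ i, if j = i then 0 else |A i j| * x j ^ 2 := Finset.sum_comm
      _ = ∑ j, ∑ i ∈ Finset.univ.erase j, |A i j| * x j ^ 2 := by
          exact Finset.sum_congr rfl fun j _ => (erase_eq' (fun i j => |A i j| * x j ^ 2) j).symm
      _ = ∑ j, x j ^ 2 * ∑ i ∈ Finset.univ.erase j, |A j i| := by
          refine Finset.sum_congr rfl fun j _ => ?_
          rw [Finset.mul_sum]
          exact Finset.sum_congr rfl fun i _ => by rw [hsymm j i, mul_comm]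
  have hdouble : ∑ i, ∑ j ∈ Finset.univ.erase i, |A i j| * (x i ^ 2 + x j ^ 2) / 2
      = ∑ i, x i ^ 2 * ∑ j ∈ Finset.univ.erase i, |A i j| := by
    have expand : ∀ i : Fin k, ∑ j ∈ Finset.univ.erase i, |A i j| * (x i ^ 2 + x j ^ 2) / 2
        = (x i ^ 2 * ∑ j ∈ Finset.univ.erase i, |A i j|) / 2
          + (∑ j ∈ Finset.univ.erase i, |A i j| * x j ^ 2) / 2 := by
      intro i
      calc ∑ j ∈ Finset.univ.erase i, |A i j| * (x i ^ 2 + x j ^ 2) / 2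
          = ∑ j ∈ Finset.univ.erase i, (x i ^ 2 * |A i j| / 2 + |A i j| * x j ^ 2 / 2) :=
            Finset.sum_congr rfl fun j _ => by ring
        _ = ∑ j ∈ Finset.univ.erase i, x i ^ 2 * |A i j| / 2
            + ∑ j ∈ Finset.univ.erase i, |A i j| * x j ^ 2 / 2 := Finset.sum_add_distrib
        _ = (x i ^ 2 * ∑ j ∈ Finset.univ.erase i, |A i j|) / 2
            + (∑ j ∈ Finset.univ.erase i, |A i j| * x j ^ 2) / 2 := by
            rw [Finset.mul_sum, Finset.sum_div, Finset.sum_div]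
    rw [Finset.sum_congr rfl fun i _ => expand i, Finset.sum_add_distrib,
      ← Finset.sum_div, ← Finset.sum_div, swap]
    ring
  have hlow : ∑ i, x i * (A *ᵥ x) i ≥
      ∑ i, x i ^ 2 * (A i i - ∑ j ∈ Finset.univ.erase i, |A i j|) := by
    have := Finset.sum_le_sum (fun i (_ : i ∈ Finset.univ) => key i)
    calc ∑ i, x i * (A *ᵥ x) i
        ≥ ∑ i, (x i ^ 2 * A i i - ∑ j ∈ Finset.univ.erase i, |A i j| * (x i ^ 2 + x j ^ 2) / 2) :=
          this
      _ = ∑ i, x i ^ 2 * A i i - ∑ i, ∑ j ∈ Finset.univ.erase i, |A i j| * (x i ^2 + x j^2)/2 :=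
          Finset.sum_sub_distrib _ _
      _ = ∑ i, x i ^ 2 * A i i - ∑ i, x i ^ 2 * ∑ j ∈ Finset.univ.erase i, |A i j| := by
          rw [hdouble]
      _ = ∑ i, x i ^ 2 * (A i i - ∑ j ∈ Finset.univ.erase i, |A i j|) := by
          rw [← Finset.sum_sub_distrib]
          exact Finset.sum_congr rfl fun i _ => by ring
  have hpos : 0 < ∑ i, x i ^ 2 * (A i i - ∑ j ∈ Finset.univ.erase i, |A i j|) := by
    obtain ⟨i₀, hi₀⟩ := Function.ne_iff.mp hx
    refine Finset.sum_pos' (fun i _ => ?_) ⟨i₀, Finset.mem_univ i₀, ?_⟩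
    · exact mul_nonneg (sq_nonneg _) (le_of_lt (sub_pos.mpr (hdom i)))
    · exact mul_pos (sq_abs (x i₀) ▸ pow_pos (abs_pos.mpr hi₀) 2) (sub_pos.mpr (hdom i₀))
  linarith [hlow]




noncomputable def Sf (t : ℝ) : ℝ :=
  Real.sqrt ((t+1)*(t+2)*(t+3)*(t+4) / ((2*t+3)*(2*t+5)^2*(2*t+7)))

noncomputable def ff (t : ℝ) : ℝ := (t+1)*(t+3)/((2*t+3)*(2*t+5))

noncomputable def dd (t : ℝ) : ℝ := 2*(t+1)*(t+2)/((2*t+1)*(2*t+5))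

lemma Sf_nonneg (t : ℝ) : 0 ≤ Sf t := Real.sqrt_nonneg _

lemma ff_nonneg {t : ℝ} (ht : -1 ≤ t) : 0 ≤ ff t := by
  unfold ff
  apply div_nonneg <;> nlinarith

lemma Sf_le {t : ℝ} (ht : -1 ≤ t) : Sf t ≤ (ff t + ff (t+1))/2 := by
  have h3 : (0:ℝ) < 2*t+3 := by linarith
  have h5 : (0:ℝ) < 2*t+5 := by linarith
  have h7 : (0:ℝ) < 2*t+7 := by linarith
  have h9 : (0:ℝ) < 2*t+9 := by linarith
  have hprod : (t+1)*(t+2)*(t+3)*(t+4) / ((2*t+3)*(2*t+5)^2*(2*t+7)) = ff t * ff (t+1) := by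
    unfold ff
    rw [div_mul_div_comm,
      show (2*t+3)*(2*t+5)*((2*(t+1)+3)*(2*(t+1)+5)) = (2*t+3)*(2*t+5)^2*(2*t+7) by ring]
    congr 1
    ring
  have ha := ff_nonneg ht
  have hb := ff_nonneg (t := t+1) (by linarith)
  calc Sf t = Real.sqrt (ff t * ff (t+1)) := by rw [Sf, hprod]
    _ ≤ Real.sqrt (((ff t + ff (t+1))/2)^2) :=
        Real.sqrt_le_sqrt (by nlinarith [sq_nonneg (ff t - ff (t+1))])
    _ = (ff t + ff (t+1))/2 := Real.sqrt_sq (by linarith)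

lemma rowbound {t : ℝ} (ht : 1 ≤ t) : dd t + Sf (t-2) + Sf t ≤ 1 := by
  have h1 := Sf_le (t := t-2) (by linarith)
  rw [show t-2+1 = t-1 by ring] at h1
  have h2 := Sf_le (t := t) (by linarith)
  have e1 : (0:ℝ) < 2*t-1 := by linarith
  have e2 : (0:ℝ) < 2*t+1 := by linarith
  have e3 : (0:ℝ) < 2*t+3 := by linarith
  have e4 : (0:ℝ) < 2*t+5 := by linarith
  have e5 : (0:ℝ) < 2*t+7 := by linarith
  have key : dd t + (ff (t-2) + ff (t-1))/2 + (ff t + ff (t+1))/2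
      = 1 - 18/((2*t-1)*(2*t+1)*(2*t+5)*(2*t+7)) := by
    unfold dd ff
    rw [show t-2+1 = t-1 by ring, show t-2+3 = t+1 by ring, show 2*(t-2)+3 = 2*t-1 by ring,
      show 2*(t-2)+5 = 2*t+1 by ring, show t-1+1 = t by ring, show t-1+3 = t+2 by ring,
      show 2*(t-1)+3 = 2*t+1 by ring, show 2*(t-1)+5 = 2*t+3 by ring,
      show t+1+1 = t+2 by ring, show t+1+3 = t+4 by ring,
      show 2*(t+1)+3 = 2*t+5 by ring, show 2*(t+1)+5 = 2*t+7 by ring]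
    field_simp
    ring
  have hpos : 0 < 18/((2*t-1)*(2*t+1)*(2*t+5)*(2*t+7)) := by positivity
  linarith

lemma sum_ite_fin_le {k : ℕ} {a : ℝ} (ha : 0 ≤ a) (P : ℕ → Prop) [DecidablePred P]
    (hP : ∀ x y, P x → P y → x = y) : ∑ j : Fin k, (if P (j:ℕ) then a else 0) ≤ a := by
  by_cases hex : ∃ j : Fin k, P (j:ℕ)
  · obtain ⟨j₀, hj₀⟩ := hex
    have heq : ∀ j : Fin k, (if P (j:ℕ) then a else 0) = (if j = j₀ then a else 0) := by
      intro j
      by_cases h : P (j:ℕ)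
      · rw [if_pos h, if_pos (Fin.ext (hP _ _ h hj₀))]
      · rw [if_neg h, if_neg (fun hc => h (by rw [hc]; exact hj₀))]
    rw [Finset.sum_congr rfl fun j _ => heq j, Finset.sum_ite_eq' Finset.univ j₀ (fun _ => a),
      if_pos (Finset.mem_univ j₀)]
  · push_neg at hex
    rw [Finset.sum_eq_zero fun j _ => if_neg (hex j)]
    exact ha

lemma Dmat_symm (i j : ℕ) : Dmat i j = Dmat j i := by
  rcases eq_or_ne i j with h | h
  · subst h; rfl
  · simp [Dmat, h, Ne.symm h]

lemma Mmat_symm (i j : ℕ) : Mmat i j = Mmat j i := by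
  rcases eq_or_ne i j with h | h
  · subst h; rfl
  · unfold Mmat
    rw [if_neg h, if_neg (Ne.symm h)]
    split_ifs <;> first | rfl | omega

theorem trailing_section_posDef (n m : ℕ) (hm : n < m) :
    Matrix.PosDef
      (Matrix.of fun i j : Fin (m - n) =>
        Dmat (n + 1 + (i : ℕ)) (n + 1 + (j : ℕ)) -
          (((n : ℝ) + 1) * ((n : ℝ) + 2)) * Mmat (n + 1 + (i : ℕ)) (n + 1 + (j : ℕ))) := by
  apply posDef_of_dominant
  · show _ᴴ = _
    ext i j
    simp only [Matrix.conjTranspose_apply, Matrix.of_apply, star_trivial]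
    rw [Dmat_symm, Mmat_symm]
  · intro i
    have hσ0 : (0:ℝ) ≤ ((n:ℝ)+1)*((n:ℝ)+2) := by positivity
    set pr : ℝ := ((n + 1 + (i:ℕ) : ℕ) : ℝ) with hpr
    have hdiag : Matrix.of (fun i j : Fin (m - n) =>
        Dmat (n + 1 + (i : ℕ)) (n + 1 + (j : ℕ)) -
          (((n : ℝ) + 1) * ((n : ℝ) + 2)) * Mmat (n + 1 + (i : ℕ)) (n + 1 + (j : ℕ))) i i
        = (pr+1)*(pr+2) - ((n:ℝ)+1)*((n:ℝ)+2) * dd pr := by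
      simp [Matrix.of_apply, Dmat, Mmat, dd, hpr]
    set B : Fin (m - n) → ℝ := fun j =>
      (if (j:ℕ) = (i:ℕ)+2 then ((n:ℝ)+1)*((n:ℝ)+2) * Sf pr else 0) +
      (if (j:ℕ)+2 = (i:ℕ) then ((n:ℝ)+1)*((n:ℝ)+2) * Sf (pr-2) else 0) with hB
    have hBnonneg : ∀ j, 0 ≤ B j := by
      intro j
      refine add_nonneg ?_ ?_ <;> split_ifs <;>
        first
          | exact mul_nonneg hσ0 (Sf_nonneg _)
          | exact le_refl 0
    have hoff : ∀ j ∈ Finset.univ.erase i, |Matrix.of (fun i j : Fin (m - n) =>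
        Dmat (n + 1 + (i : ℕ)) (n + 1 + (j : ℕ)) -
          (((n : ℝ) + 1) * ((n : ℝ) + 2)) * Mmat (n + 1 + (i : ℕ)) (n + 1 + (j : ℕ))) i j|
        ≤ B j := by
      intro j hj
      have hne : (j:ℕ) ≠ (i:ℕ) := fun h => Finset.ne_of_mem_erase hj (Fin.ext h)
      have hD : Dmat (n + 1 + (i:ℕ)) (n + 1 + (j:ℕ)) = 0 := if_neg (by omega)
      simp only [Matrix.of_apply, hD, zero_sub, abs_neg, hB]
      rw [abs_mul, abs_of_nonneg hσ0]
      by_cases h1 : (i:ℕ) + 2 = (j:ℕ)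
      · have hM : Mmat (n + 1 + (i:ℕ)) (n + 1 + (j:ℕ)) = -Sf pr := by
          rw [Mmat, if_neg (by omega), if_pos (by omega), Sf]
        rw [hM, abs_neg, abs_of_nonneg (Sf_nonneg _), if_pos (by omega), if_neg (by omega)]
        simp
      · by_cases h2 : (j:ℕ) + 2 = (i:ℕ)
        · have hc : ((n + 1 + (j:ℕ) : ℕ) : ℝ) = pr - 2 := by
            rw [hpr]
            have : ((j:ℕ) : ℝ) + 2 = ((i:ℕ) : ℝ) := by exact_mod_cast congrArg (Nat.cast : ℕ → ℝ) h2
            push_cast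
            linarith
          have hM : Mmat (n + 1 + (i:ℕ)) (n + 1 + (j:ℕ)) = -Sf (pr-2) := by
            rw [Mmat, if_neg (by omega), if_neg (by omega), if_pos (by omega), Sf, hc]
          rw [hM, abs_neg, abs_of_nonneg (Sf_nonneg _), if_neg (by omega), if_pos (by omega)]
          simp
        · have hM : Mmat (n + 1 + (i:ℕ)) (n + 1 + (j:ℕ)) = 0 := by
            rw [Mmat, if_neg (by omega), if_neg (by omega), if_neg (by omega)]
          rw [hM, abs_zero, mul_zero]
          exact hBnonneg j
    have hsum : ∑ j ∈ Finset.univ.erase i, |Matrix.of (fun i j : Fin (m - n) =>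
        Dmat (n + 1 + (i : ℕ)) (n + 1 + (j : ℕ)) -
          (((n : ℝ) + 1) * ((n : ℝ) + 2)) * Mmat (n + 1 + (i : ℕ)) (n + 1 + (j : ℕ))) i j|
        ≤ ((n:ℝ)+1)*((n:ℝ)+2) * Sf pr + ((n:ℝ)+1)*((n:ℝ)+2) * Sf (pr-2) := by
      calc ∑ j ∈ Finset.univ.erase i, |Matrix.of (fun i j : Fin (m - n) =>
            Dmat (n + 1 + (i : ℕ)) (n + 1 + (j : ℕ)) -
              (((n : ℝ) + 1) * ((n : ℝ) + 2)) * Mmat (n + 1 + (i : ℕ)) (n + 1 + (j : ℕ))) i j|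
          ≤ ∑ j ∈ Finset.univ.erase i, B j := Finset.sum_le_sum hoff
        _ ≤ ∑ j, B j := Finset.sum_le_sum_of_subset_of_nonneg (Finset.subset_univ _)
            (fun j _ _ => hBnonneg j)
        _ = (∑ j : Fin (m - n), if (j:ℕ) = (i:ℕ)+2 then ((n:ℝ)+1)*((n:ℝ)+2) * Sf pr else 0)
            + ∑ j : Fin (m - n), if (j:ℕ)+2 = (i:ℕ) then ((n:ℝ)+1)*((n:ℝ)+2) * Sf (pr-2) else 0 :=
            Finset.sum_add_distrib
        _ ≤ ((n:ℝ)+1)*((n:ℝ)+2) * Sf pr + ((n:ℝ)+1)*((n:ℝ)+2) * Sf (pr-2) := by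
            refine add_le_add ?_ ?_
            · exact sum_ite_fin_le (mul_nonneg hσ0 (Sf_nonneg _))
                (fun x => x = (i:ℕ)+2) (fun x y hx hy => by omega)
            · exact sum_ite_fin_le (mul_nonneg hσ0 (Sf_nonneg _))
                (fun x => x + 2 = (i:ℕ)) (fun x y hx hy => by omega)
    rw [hdiag]
    have ht : (1:ℝ) ≤ pr := by
      have h1 : (1:ℕ) ≤ n + 1 + (i:ℕ) := by omega
      rw [hpr]
      exact_mod_cast h1
    have hrow := rowbound ht
    have hn1 : ((n:ℝ)+1) ≤ pr := by
      rw [hpr]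
      have : ((n+1 : ℕ) : ℝ) ≤ ((n + 1 + (i:ℕ) : ℕ) : ℝ) := Nat.cast_le.mpr (by omega)
      push_cast at this ⊢
      linarith
    have hlt : ((n:ℝ)+1)*((n:ℝ)+2) < (pr+1)*(pr+2) := by
      nlinarith [Nat.cast_nonneg (α := ℝ) n]
    have hmul := mul_le_mul_of_nonneg_left hrow hσ0
    nlinarith [hsum]
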